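/- Let Q be a quiver of type A_n and i(Q) its standard compatible reduced expression. For a pair of equal letters s occurring in consecutive factors (l_p ↘ 1)(l_{p+1} ↘ 1) of i(Q) with 1 < s ≤ l_p, at positions t (first factor) and u (second factor), the Lusztig-cone inequality a_{t+1} + a_{u-1} ≥ a_t + a_u translates, under the substitution a = D(c), into: if s ≤ p, the inequality Σ_{α ∈ T_{n+1-p}, s ∈ α, s-1 ∉ α} c_α ≤ Σ_{α ∈ T_{n-p}, s+1 ∈ α, s ∉ α} c_α; and if s > p, the inequality Σ_{α ∈ T_{n+1-p}, s-1 ∈ α, s ∉ α} c_α ≥ Σ_{α ∈ T_{n-p}, s ∈ α, s+1 ∉ α} c_α. -/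
import Mathlib


attribute [local instance] Classical.propDecidable

/-- Position of the `m`-th vertex (0-based) of the slice `S_z` determined by the quiver
orientation `ε` (`ε m = true`: edge `m` right-oriented; `false`: left-oriented), as a
positive root `(i, j) ↔ α_i + ... + α_j` of `A_n`.  The slice starts at `(z, z)`. -/
def slicePos (ε : ℕ → Bool) (z : ℕ) : ℕ → ℤ × ℤ
  | 0 => ((z : ℤ), (z : ℤ))
  | m + 1 =>
    let p := slicePos ε z m
    if ε (m + 1) then (p.1, p.2 + 1) else (p.1 - 1, p.2)

/-- The `m`-th vertex of `S_z` is a genuine positive root, i.e. belongs to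
`T_z = S_z ∩ A(Q_k)`. -/
def inRange (n : ℕ) (ε : ℕ → Bool) (z m : ℕ) : Prop :=
  1 ≤ (slicePos ε z m).1 ∧ (slicePos ε z m).2 ≤ (n : ℤ)

/-- `Σ_{α ∈ T_z, s ∈ α} c_α`: the sum of `c_α` over the roots `α` of the slice `T_z`
whose support contains the simple root `α_s`. -/
noncomputable def ASum (n : ℕ) (ε : ℕ → Bool) (c : ℤ × ℤ → ℤ) (z : ℕ) (s : ℤ) : ℤ :=
  ∑ m ∈ Finset.range n,
    if inRange n ε z m ∧ (slicePos ε z m).1 ≤ s ∧ s ≤ (slicePos ε z m).2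
    then c (slicePos ε z m) else 0

/-- `Σ_{α ∈ T_z, s ∈ α, s' ∉ α} c_α`. -/
noncomputable def BSum (n : ℕ) (ε : ℕ → Bool) (c : ℤ × ℤ → ℤ) (z : ℕ) (s s' : ℤ) : ℤ :=
  ∑ m ∈ Finset.range n,
    if inRange n ε z m ∧ (slicePos ε z m).1 ≤ s ∧ s ≤ (slicePos ε z m).2 ∧
        ¬((slicePos ε z m).1 ≤ s' ∧ s' ≤ (slicePos ε z m).2)
    then c (slicePos ε z m) else 0

/-- Translation of the Lusztig-cone inequalities under `a = D(c)` (Section 9 of the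
paper).  Let `e = l_p` and `e'= l_{p+1}` be two consecutive left-oriented edges of `Q`
(all edges strictly between being right-oriented; `e' = n` encodes the middle factor
`(n ↘ 1)`), where `p` is the number of left-oriented edges `≤ e`, so that the factors
`(l_p ↘ 1)` and `(l_{p+1} ↘ 1)` of `i(Q)` correspond to the slices denoted `T_{n+1-p}`
and `T_{n-p}` in the paper (here `slicePos`-slices `p` and `p+1`).  For a letter `s`
with `1 < s ≤ l_p`, occurring at position `t` in the first factor and `u` in the second,
the Lusztig-cone inequality `a_{t+1} + a_{u-1} ≥ a_t + a_u` translates into: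
if `s ≤ p`, `Σ_{α ∈ T_{n+1-p}, s ∈ α, s-1 ∉ α} c_α ≤ Σ_{α ∈ T_{n-p}, s+1 ∈ α, s ∉ α} c_α`;
and if `s > p`, `Σ_{α ∈ T_{n+1-p}, s-1 ∈ α, s ∉ α} c_α ≥ Σ_{α ∈ T_{n-p}, s ∈ α, s+1 ∉ α} c_α`,
where `a_t = Σ_{α ∈ T_{n+1-p}, s ∈ α} c_α`, `a_{t+1} = Σ_{α ∈ T_{n+1-p}, s-1 ∈ α} c_α`,
`a_{u-1} = Σ_{α ∈ T_{n-p}, s+1 ∈ α} c_α`, `a_u = Σ_{α ∈ T_{n-p}, s ∈ α} c_α`. -/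
lemma slicePos_left_le (ε : ℕ → Bool) (z m : ℕ) : (slicePos ε z m).1 ≤ (z : ℤ) := by
  induction m with
  | zero => simp [slicePos]
  | succ m ih =>
    simp only [slicePos]
    split <;> simp <;> omega

lemma slicePos_le_right (ε : ℕ → Bool) (z m : ℕ) : (z : ℤ) ≤ (slicePos ε z m).2 := by
  induction m with
  | zero => simp [slicePos]
  | succ m ih =>
    simp only [slicePos]
    split <;> simp <;> omega

lemma ASum_add_BSum (n : ℕ) (ε : ℕ → Bool) (c : ℤ × ℤ → ℤ) (z : ℕ) (s s' : ℤ) :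
    ASum n ε c z s + BSum n ε c z s' s = ASum n ε c z s' + BSum n ε c z s s' := by
  unfold ASum BSum
  rw [← Finset.sum_add_distrib, ← Finset.sum_add_distrib]
  apply Finset.sum_congr rfl
  intro m _
  by_cases h1 : (slicePos ε z m).1 ≤ s ∧ s ≤ (slicePos ε z m).2 <;>
    by_cases h2 : (slicePos ε z m).1 ≤ s' ∧ s' ≤ (slicePos ε z m).2 <;>
    by_cases h0 : inRange n ε z m <;>
    simp [h0, h1, h2]

lemma BSum_zero_lo (n : ℕ) (ε : ℕ → Bool) (c : ℤ × ℤ → ℤ) (z : ℕ) (s s' : ℤ)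
    (h1 : s ≤ s') (h2 : s' ≤ (z : ℤ)) : BSum n ε c z s s' = 0 := by
  unfold BSum
  apply Finset.sum_eq_zero
  intro m _
  rw [if_neg]
  rintro ⟨_, hi, hj, hns'⟩
  exact hns' ⟨le_trans hi h1, le_trans h2 (slicePos_le_right ε z m)⟩

lemma BSum_zero_hi (n : ℕ) (ε : ℕ → Bool) (c : ℤ × ℤ → ℤ) (z : ℕ) (s s' : ℤ)
    (h1 : s' ≤ s) (h2 : (z : ℤ) ≤ s') : BSum n ε c z s s' = 0 := by
  unfold BSum
  apply Finset.sum_eq_zero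
  intro m _
  rw [if_neg]
  rintro ⟨_, hi, hj, hns'⟩
  exact hns' ⟨le_trans (slicePos_left_le ε z m) h2, le_trans h1 hj⟩

theorem lusztig_inequality_translation
    (n e e' p s : ℕ) (ε : ℕ → Bool) (c : ℤ × ℤ → ℤ)
    (hn : 1 ≤ n)
    (he : 1 ≤ e) (hee' : e < e') (he'n : e' ≤ n)
    (hel : ε e = false) (he'l : e' ≤ n - 1 → ε e' = false)
    (hbetween : ∀ m, e < m → m < e' → ε m = true)
    (hp : p = ((Finset.Icc 1 e).filter (fun m => ε m = false)).card)
    (hs1 : 2 ≤ s) (hse : s ≤ e) :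
    (s ≤ p →
      ((ASum n ε c p (s : ℤ) + ASum n ε c (p + 1) (s : ℤ) ≤
          ASum n ε c p ((s : ℤ) - 1) + ASum n ε c (p + 1) ((s : ℤ) + 1)) ↔
        BSum n ε c p (s : ℤ) ((s : ℤ) - 1) ≤
          BSum n ε c (p + 1) ((s : ℤ) + 1) (s : ℤ))) ∧
    (p < s →
      ((ASum n ε c p (s : ℤ) + ASum n ε c (p + 1) (s : ℤ) ≤
          ASum n ε c p ((s : ℤ) - 1) + ASum n ε c (p + 1) ((s : ℤ) + 1)) ↔
        BSum n ε c (p + 1) (s : ℤ) ((s : ℤ) + 1) ≤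
          BSum n ε c p ((s : ℤ) - 1) (s : ℤ))) := by
  constructor
  · intro hsp
    have hsp' : (s : ℤ) ≤ (p : ℤ) := by exact_mod_cast hsp
    have h1 : BSum n ε c p ((s:ℤ) - 1) (s:ℤ) = 0 :=
      BSum_zero_lo n ε c p _ _ (by omega) (by omega)
    have h2 : BSum n ε c (p+1) (s:ℤ) ((s:ℤ)+1) = 0 :=
      BSum_zero_lo n ε c (p+1) _ _ (by omega) (by push_cast; omega)
    have e1 := ASum_add_BSum n ε c p (s:ℤ) ((s:ℤ)-1)
    have e2 := ASum_add_BSum n ε c (p+1) ((s:ℤ)+1) (s:ℤ)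
    constructor <;> intro h <;> linarith
  · intro hps
    have hps' : (p : ℤ) < (s : ℤ) := by exact_mod_cast hps
    have h1 : BSum n ε c p (s:ℤ) ((s:ℤ) - 1) = 0 :=
      BSum_zero_hi n ε c p _ _ (by omega) (by omega)
    have h2 : BSum n ε c (p+1) ((s:ℤ)+1) (s:ℤ) = 0 :=
      BSum_zero_hi n ε c (p+1) _ _ (by omega) (by push_cast; omega)
    have e1 := ASum_add_BSum n ε c p (s:ℤ) ((s:ℤ)-1)
    have e2 := ASum_add_BSum n ε c (p+1) ((s:ℤ)+1) (s:ℤ)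
    constructor <;> intro h <;> linarith
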